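/- arXiv:2402.12619 — 4 statements merged into one kernel-verified Lean document; each statement's English description precedes it below -/
import Mathlib

section
/- Let R be a finite commutative ring with identity, T = Tr(R), and n a nonzero zero-divisor of R. Let A be the matrix with a11 = n, a12 = 0, a21 = 0, a22 = 0, and let Z(n) = {s ∈ R : sn = 0}. Then N(A) consists exactly of the matrices [[a,b],[0,c]] with a,c ∈ R and b ∈ Z(n), excluding scalar matrices and A itself, and |N(A)| = |Z(n)|·|R|^2 − |R| − 1. -/
open Matrix

/-- The ring of 2×2 upper triangular matrices over `R`. -/
def Tri (R : Type*) [CommRing R] : Subring (Matrix (Fin 2) (Fin 2) R) where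
  carrier := {A | A 1 0 = 0}
  mul_mem' := by
    intro a b ha hb
    simp only [Set.mem_setOf_eq] at *
    simp [Matrix.mul_apply, Fin.sum_univ_two, ha, hb]
  one_mem' := by simp [Matrix.one_apply]
  add_mem' := by
    intro a b ha hb
    simp_all [Matrix.add_apply]
  zero_mem' := by simp
  neg_mem' := by
    intro a ha
    simp_all

/-- The commuting graph of a ring `T`: vertices are the noncentral elements,
two distinct vertices are adjacent iff they commute. -/
def commGraph (T : Type*) [Ring T] : SimpleGraph {x : T // x ∉ Set.center T} where
  Adj a b := a ≠ b ∧ (a : T) * b = b * a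
  symm := by
    constructor
    rintro a b ⟨h1, h2⟩
    exact ⟨h1.symm, h2.symm⟩
  loopless := by constructor; rintro a ⟨h, _⟩; exact h rfl

section Aux

variable {R : Type*} [CommRing R]

lemma tri_eta (B : Tri R) :
    (B : Matrix (Fin 2) (Fin 2) R) = !![(B : Matrix (Fin 2) (Fin 2) R) 0 0,
      (B : Matrix (Fin 2) (Fin 2) R) 0 1; 0, (B : Matrix (Fin 2) (Fin 2) R) 1 1] := by
  have h : (B : Matrix (Fin 2) (Fin 2) R) 1 0 = 0 := B.2
  conv_lhs => rw [Matrix.eta_fin_two (B : Matrix (Fin 2) (Fin 2) R)]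
  rw [h]

lemma smul_one_fin_two (x : R) : x • (1 : Matrix (Fin 2) (Fin 2) R) = !![x,0;0,x] := by
  rw [Matrix.one_fin_two]
  ext i j
  fin_cases i <;> fin_cases j <;> simp

lemma mem_center_tri (B : Tri R) :
    B ∈ Set.center (Tri R) ↔ ∃ x : R, (B : Matrix (Fin 2) (Fin 2) R) = x • 1 := by
  rw [Semigroup.mem_center_iff]
  constructor
  · intro h
    have hE12 : (!![(0:R),1;0,0] : Matrix (Fin 2) (Fin 2) R) ∈ Tri R := by
      show _ = _ ; simp
    have hE11 : (!![(1:R),0;0,0] : Matrix (Fin 2) (Fin 2) R) ∈ Tri R := by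
      show _ = _ ; simp
    have h1 := congrArg (Subtype.val) (h ⟨_, hE12⟩)
    have h2 := congrArg (Subtype.val) (h ⟨_, hE11⟩)
    simp only [Subring.coe_mul] at h1 h2
    rw [tri_eta B] at h1 h2
    simp [Matrix.mul_fin_two] at h1 h2
    have e1 := h1.1
    have e2 := h2.1
    refine ⟨(B : Matrix (Fin 2) (Fin 2) R) 0 0, ?_⟩
    conv_lhs => rw [tri_eta B, e2, e1]
    rw [smul_one_fin_two]
  · rintro ⟨x, hx⟩ g
    apply Subtype.ext
    simp only [Subring.coe_mul, hx]
    rw [smul_mul_assoc, mul_smul_comm, one_mul, mul_one]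

lemma comm_iff (n : R) (A B : Tri R)
    (hA : (A : Matrix (Fin 2) (Fin 2) R) = !![n, 0; 0, 0]) :
    A * B = B * A ↔ (B : Matrix (Fin 2) (Fin 2) R) 0 1 * n = 0 := by
  rw [Subtype.ext_iff]
  constructor
  · intro h
    simp only [Subring.coe_mul, hA] at h
    rw [tri_eta B] at h
    simp [Matrix.mul_fin_two] at h
    have e := h.1.2
    rw [mul_comm]
    exact e
  · intro h
    simp only [Subring.coe_mul, hA]
    rw [tri_eta B]
    ext i j
    fin_cases i <;> fin_cases j <;>
      first
        | (simp [Matrix.mul_fin_two]; simpa [mul_comm] using h)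
        | simp [Matrix.mul_fin_two, mul_comm]

end Aux

/-- Theorem 2.2(iv): for `A = [[n,0],[0,0]]` with `n` a nonzero zero-divisor,
the neighbourhood of `A` consists exactly of the matrices `[[a,b],[0,c]]` with
`b` in the annihilator `Z(n) = {s | s n = 0}`, excluding scalar matrices and
`A` itself, and it has `|Z(n)| |R|^2 - |R| - 1` elements. -/
theorem neighbourhood_A4 {R : Type*} [CommRing R] [Fintype R] (n : R)
    (hn : n ≠ 0) (hzd : ∃ s : R, s ≠ 0 ∧ s * n = 0) (A : Tri R)
    (hA : (A : Matrix (Fin 2) (Fin 2) R) = !![n, 0; 0, 0]) :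
    {B : Tri R | A * B = B * A ∧ B ≠ A ∧ B ∉ Set.center (Tri R)} =
      {B : Tri R | (∃ a b c : R, b * n = 0 ∧
          (B : Matrix (Fin 2) (Fin 2) R) = !![a, b; 0, c]) ∧
        (¬ ∃ x : R, (B : Matrix (Fin 2) (Fin 2) R) = x • (1 : Matrix (Fin 2) (Fin 2) R)) ∧
        B ≠ A} ∧
    Nat.card {B : Tri R | A * B = B * A ∧ B ≠ A ∧ B ∉ Set.center (Tri R)} =
      Nat.card {s : R | s * n = 0} * Nat.card R ^ 2 - Nat.card R - 1 := by
  set Full : Set (Tri R) := {B | (B : Matrix (Fin 2) (Fin 2) R) 0 1 * n = 0} with hFull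
  set Scal : Set (Tri R) :=
    {B | ∃ x : R, (B : Matrix (Fin 2) (Fin 2) R) = x • 1} with hScal
  have hmemFull : ∀ B : Tri R, ((∃ a b c : R, b * n = 0 ∧
      (B : Matrix (Fin 2) (Fin 2) R) = !![a, b; 0, c]) ↔ B ∈ Full) := by
    intro B
    constructor
    · rintro ⟨a, b, c, hb, hB⟩
      show (B : Matrix (Fin 2) (Fin 2) R) 0 1 * n = 0
      rw [hB]
      simpa using hb
    · intro hB
      exact ⟨(B : Matrix (Fin 2) (Fin 2) R) 0 0, (B : Matrix (Fin 2) (Fin 2) R) 0 1,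
        (B : Matrix (Fin 2) (Fin 2) R) 1 1, hB, tri_eta B⟩
  have hseteq : {B : Tri R | A * B = B * A ∧ B ≠ A ∧ B ∉ Set.center (Tri R)} =
      {B : Tri R | (∃ a b c : R, b * n = 0 ∧
          (B : Matrix (Fin 2) (Fin 2) R) = !![a, b; 0, c]) ∧
        (¬ ∃ x : R, (B : Matrix (Fin 2) (Fin 2) R) = x • (1 : Matrix (Fin 2) (Fin 2) R)) ∧
        B ≠ A} := by
    ext B
    simp only [Set.mem_setOf_eq, comm_iff n A B hA, mem_center_tri, hmemFull B]
    tauto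
  refine ⟨hseteq, ?_⟩
  have hset2 : {B : Tri R | A * B = B * A ∧ B ≠ A ∧ B ∉ Set.center (Tri R)} =
      Full \ (Scal ∪ {A}) := by
    ext B
    simp only [Set.mem_setOf_eq, comm_iff n A B hA, mem_center_tri, Set.mem_diff,
      Set.mem_union, Set.mem_singleton_iff, hFull, hScal]
    tauto
  have hScalFull : Scal ⊆ Full := by
    rintro B ⟨x, hx⟩
    show (B : Matrix (Fin 2) (Fin 2) R) 0 1 * n = 0
    rw [hx, smul_one_fin_two]
    simp
  have hAFull : A ∈ Full := by
    show (A : Matrix (Fin 2) (Fin 2) R) 0 1 * n = 0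
    rw [hA]; simp
  have hAnotScal : A ∉ Scal := by
    rintro ⟨x, hx⟩
    rw [hA, smul_one_fin_two] at hx
    have e1 := congrFun (congrFun hx 0) 0
    have e2 := congrFun (congrFun hx 1) 1
    simp at e1 e2
    exact hn (e1.trans e2.symm)
  -- Equivalences for counting
  have e1 : ({s : R | s * n = 0} × R × R) ≃ Full := by
    refine ⟨fun p => ⟨⟨!![p.2.1, (p.1 : R); 0, p.2.2], by show _ = _; simp⟩,
        by show (!![p.2.1, (p.1 : R); 0, p.2.2] : Matrix (Fin 2) (Fin 2) R) 0 1 * n = 0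
           have h : (p.1 : R) * n = 0 := p.1.2
           simpa using h⟩,
      fun B => (⟨(B.1 : Matrix (Fin 2) (Fin 2) R) 0 1, B.2⟩,
        (B.1 : Matrix (Fin 2) (Fin 2) R) 0 0, (B.1 : Matrix (Fin 2) (Fin 2) R) 1 1),
      ?_, ?_⟩
    · rintro ⟨⟨s, hs⟩, a, c⟩
      simp
    · rintro ⟨B, hB⟩
      apply Subtype.ext
      apply Subtype.ext
      exact (tri_eta B).symm
  have e2 : R ≃ Scal := by
    refine ⟨fun x => ⟨⟨x • 1, by show _ = _; rw [smul_one_fin_two]; simp⟩, ⟨x, rfl⟩⟩,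
      fun B => (B.1 : Matrix (Fin 2) (Fin 2) R) 0 0, ?_, ?_⟩
    · intro x
      simp [smul_one_fin_two]
    · rintro ⟨B, x, hx⟩
      apply Subtype.ext
      apply Subtype.ext
      show ((B : Matrix (Fin 2) (Fin 2) R) 0 0) • (1 : Matrix (Fin 2) (Fin 2) R) =
        (B : Matrix (Fin 2) (Fin 2) R)
      rw [hx]
      simp [smul_one_fin_two]
  have hFullCard : Full.ncard = Nat.card {s : R | s * n = 0} * Nat.card R ^ 2 := by
    rw [← Nat.card_coe_set_eq, ← Nat.card_congr e1, Nat.card_prod, Nat.card_prod]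
    ring
  have hScalCard : Scal.ncard = Nat.card R := by
    rw [← Nat.card_coe_set_eq, ← Nat.card_congr e2]
  rw [hset2, Nat.card_coe_set_eq, Set.ncard_diff (by
      intro B hB
      rcases hB with hB | hB
      · exact hScalFull hB
      · rw [Set.mem_singleton_iff] at hB; rw [hB]; exact hAFull),
    Set.ncard_union_eq (Set.disjoint_singleton_right.mpr hAnotScal),
    Set.ncard_singleton, hFullCard, hScalCard, Nat.sub_sub]
end

section
/- Let R be a finite commutative ring with identity, T = Tr(R), u a unit of R, and n a nonzero zero-divisor of R. Let A be the matrix with a11 = u, a12 = n, a21 = 0, a22 = 0. Then N(A) consists exactly of the matrices [[a, u⁻¹(a−c)n],[0,c]] with a,c ∈ R, excluding scalar matrices and A itself, and |N(A)| = |R|^2 − |R| − 1. -/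
open Matrix

section Aux
variable {R : Type*} [CommRing R]

lemma tri_apply_10 (B : Tri R) : (B : Matrix (Fin 2) (Fin 2) R) 1 0 = 0 := B.2

lemma tri_mem (M : Matrix (Fin 2) (Fin 2) R) (h : M 1 0 = 0) : M ∈ Tri R := h

lemma key (u : Rˣ) (n b a c : R) :
    (u:R) * b + n * c = a * n ↔ b = (↑u⁻¹:R) * (a - c) * n := by
  rw [mul_assoc, Units.eq_inv_mul_iff_mul_eq]
  constructor <;> intro h <;> linear_combination h

lemma commute_iff (u : Rˣ) (n : R) (A B : Tri R)
    (hA : (A : Matrix (Fin 2) (Fin 2) R) = !![(u : R), n; 0, 0]) :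
    A * B = B * A ↔ ∃ a c : R,
      (B : Matrix (Fin 2) (Fin 2) R) = !![a, (↑u⁻¹ : R) * (a - c) * n; 0, c] := by
  constructor
  · intro h
    refine ⟨(B : Matrix (Fin 2) (Fin 2) R) 0 0, (B : Matrix (Fin 2) (Fin 2) R) 1 1, ?_⟩
    have h' : (A : Matrix (Fin 2) (Fin 2) R) * B = (B : Matrix (Fin 2) (Fin 2) R) * A :=
      congrArg Subtype.val h
    have h01 := congrFun (congrFun h' 0) 1
    rw [hA] at h01
    simp [Matrix.mul_apply, Fin.sum_univ_two, tri_apply_10 B] at h01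
    have hb := (key u n _ _ _).mp h01
    conv_lhs => rw [tri_eta B]
    rw [hb]
  · rintro ⟨a, c, hB⟩
    apply Subtype.ext
    show (A : Matrix (Fin 2) (Fin 2) R) * B = (B : Matrix (Fin 2) (Fin 2) R) * A
    rw [hA, hB]
    ext i j
    fin_cases i <;> fin_cases j <;>
      simp [Matrix.mul_apply, Fin.sum_univ_two]
    · ring
    · have h1 : (u:R) * ↑u⁻¹ = 1 := u.mul_inv
      linear_combination (a - c) * n * h1

lemma mem_center_iff_scalar (B : Tri R) :
    B ∈ Set.center (Tri R) ↔
      ∃ x : R, (B : Matrix (Fin 2) (Fin 2) R) = x • (1 : Matrix (Fin 2) (Fin 2) R) := by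
  rw [Semigroup.mem_center_iff]
  constructor
  · intro h
    have hE11 : (!![1,0;0,0] : Matrix (Fin 2) (Fin 2) R) ∈ Tri R := by
      show (!![1,0;0,0] : Matrix (Fin 2) (Fin 2) R) 1 0 = 0; simp
    have hE12 : (!![0,1;0,0] : Matrix (Fin 2) (Fin 2) R) ∈ Tri R := by
      show (!![0,1;0,0] : Matrix (Fin 2) (Fin 2) R) 1 0 = 0; simp
    have h1 := congrArg Subtype.val (h ⟨_, hE11⟩)
    have h2 := congrArg Subtype.val (h ⟨_, hE12⟩)
    have e1 := congrFun (congrFun h1 0) 1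
    have e2 := congrFun (congrFun h2 0) 1
    simp [Matrix.mul_apply, Fin.sum_univ_two] at e1 e2
    refine ⟨(B : Matrix (Fin 2) (Fin 2) R) 0 0, ?_⟩
    ext i j
    fin_cases i <;> fin_cases j <;>
      simp [Matrix.one_apply, tri_apply_10 B, e1, e2]
  · rintro ⟨x, hx⟩
    intro g
    apply Subtype.ext
    show (g : Matrix (Fin 2) (Fin 2) R) * B = (B : Matrix (Fin 2) (Fin 2) R) * g
    rw [hx, Matrix.mul_smul, Matrix.smul_mul, one_mul, mul_one]

end Aux

/-- Theorem 2.2(vii): for `A = [[u,n],[0,0]]` with `u` a unit and `n` a nonzero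
zero-divisor, the neighbourhood of `A` consists exactly of the matrices
`[[a, u⁻¹(a-c)n],[0,c]]`, excluding scalar matrices and `A` itself, and it has
`|R|^2 - |R| - 1` elements. -/
theorem neighbourhood_A7 {R : Type*} [CommRing R] [Fintype R] (u : Rˣ) (n : R)
    (hn : n ≠ 0) (hzd : ∃ s : R, s ≠ 0 ∧ s * n = 0) (A : Tri R)
    (hA : (A : Matrix (Fin 2) (Fin 2) R) = !![(u : R), n; 0, 0]) :
    {B : Tri R | A * B = B * A ∧ B ≠ A ∧ B ∉ Set.center (Tri R)} =
      {B : Tri R | (∃ a c : R,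
          (B : Matrix (Fin 2) (Fin 2) R) = !![a, (↑u⁻¹ : R) * (a - c) * n; 0, c]) ∧
        (¬ ∃ x : R, (B : Matrix (Fin 2) (Fin 2) R) = x • (1 : Matrix (Fin 2) (Fin 2) R)) ∧
        B ≠ A} ∧
    Nat.card {B : Tri R | A * B = B * A ∧ B ≠ A ∧ B ∉ Set.center (Tri R)} =
      Nat.card R ^ 2 - Nat.card R - 1 := by
  refine ⟨?_, ?_⟩
  · ext B
    simp only [Set.mem_setOf_eq, commute_iff u n A B hA, mem_center_iff_scalar]
    tauto
  ·
    have : Nontrivial R := nontrivial_of_ne n 0 hn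
    set f : R × R → Tri R := fun p =>
      ⟨!![p.1, (↑u⁻¹ : R) * (p.1 - p.2) * n; 0, p.2], by
        show (!![p.1, (↑u⁻¹ : R) * (p.1 - p.2) * n; 0, p.2]) 1 0 = 0; simp⟩ with hf
    have hfinj : Function.Injective f := by
      intro p q h
      have h' := congrArg Subtype.val h
      have e1 := congrFun (congrFun h' 0) 0
      have e2 := congrFun (congrFun h' 1) 1
      simp [hf] at e1 e2
      exact Prod.ext e1 e2
    have himg : {B : Tri R | A * B = B * A ∧ B ≠ A ∧ B ∉ Set.center (Tri R)} =
        f '' {p : R × R | p.1 ≠ p.2 ∧ p ≠ ((u : R), 0)} := by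
      ext B
      simp only [Set.mem_setOf_eq, Set.mem_image]
      constructor
      · rintro ⟨hc, hne, hnc⟩
        obtain ⟨a, c, hB⟩ := (commute_iff u n A B hA).mp hc
        refine ⟨(a, c), ⟨?_, ?_⟩, ?_⟩
        · intro hac
          have hac' : a = c := hac
          subst hac'
          apply hnc
          rw [mem_center_iff_scalar]
          refine ⟨a, ?_⟩
          rw [hB]
          ext i j
          fin_cases i <;> fin_cases j <;> simp [Matrix.one_apply]
        · rintro h
          apply hne
          apply Subtype.ext
          rw [hB, hA]
          have ha : a = (u : R) := congrArg Prod.fst h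
          have hc' : c = 0 := congrArg Prod.snd h
          subst ha; subst hc'
          ext i j
          fin_cases i <;> fin_cases j <;> simp
        · apply Subtype.ext
          rw [hB]
      · rintro ⟨p, ⟨hpd, hp0⟩, rfl⟩
        refine ⟨?_, ?_, ?_⟩
        · rw [commute_iff u n A _ hA]
          exact ⟨p.1, p.2, rfl⟩
        · intro h
          apply hp0
          have h' := congrArg Subtype.val h
          rw [hA] at h'
          have e1 := congrFun (congrFun h' 0) 0
          have e2 := congrFun (congrFun h' 1) 1
          simp [hf] at e1 e2
          exact Prod.ext e1 e2
        · rw [mem_center_iff_scalar]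
          rintro ⟨x, hx⟩
          apply hpd
          have e1 := congrFun (congrFun hx 0) 0
          have e2 := congrFun (congrFun hx 1) 1
          simp [hf, Matrix.one_apply] at e1 e2
          rw [e1, e2]
    rw [himg, Nat.card_coe_set_eq, Set.ncard_image_of_injective _ hfinj]
    have hsplit : {p : R × R | p.1 ≠ p.2 ∧ p ≠ ((u : R), 0)} =
        {p : R × R | p.1 ≠ p.2} \ {((u : R), 0)} := by
      ext p; simp [and_comm]
    have hu0 : ((u : R), (0 : R)) ∈ {p : R × R | p.1 ≠ p.2} := by
      simp [Units.ne_zero]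
    have hdiag : ({p : R × R | p.1 = p.2} : Set (R × R)).ncard = Nat.card R := by
      have : {p : R × R | p.1 = p.2} = Set.range (fun a : R => (a, a)) := by
        ext p
        constructor
        · intro h; exact ⟨p.1, Prod.ext rfl h⟩
        · rintro ⟨a, rfl⟩; rfl
      rw [this, ← Nat.card_coe_set_eq,
        Nat.card_range_of_injective (fun a b h => (Prod.ext_iff.mp h).1)]
    have hne : ({p : R × R | p.1 ≠ p.2} : Set (R × R)).ncard =
        Nat.card R ^ 2 - Nat.card R := by
      have hcompl : ({p : R × R | p.1 ≠ p.2} : Set (R × R)) = {p : R × R | p.1 = p.2}ᶜ := by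
        ext p; simp
      have h2 := Set.ncard_add_ncard_compl ({p : R × R | p.1 = p.2})
      rw [hcompl]
      rw [hdiag] at h2
      have hcard : Nat.card (R × R) = Nat.card R ^ 2 := by
        rw [Nat.card_prod, sq]
      omega
    rw [hsplit, Set.ncard_diff_singleton_of_mem hu0, hne]
end

section
/- Let F be a finite field with q elements and T = Tr(F). Then the clique number of the commuting graph Γ(T) is q^2 − q. -/
open Matrix

section Aux

variable {F : Type*} [Field F]

lemma mem_tri_iff (A : Matrix (Fin 2) (Fin 2) F) : A ∈ Tri F ↔ A 1 0 = 0 := Iff.rfl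

lemma tri_lower (A : Tri F) : (A : Matrix (Fin 2) (Fin 2) F) 1 0 = 0 := A.2

lemma tri_coe_mul (A B : Tri F) :
    ((A * B : Tri F) : Matrix (Fin 2) (Fin 2) F)
      = (A : Matrix (Fin 2) (Fin 2) F) * (B : Matrix (Fin 2) (Fin 2) F) := rfl

lemma mem_center_tri_iff (A : Tri F) :
    A ∈ Set.center (Tri F) ↔ (A : Matrix (Fin 2) (Fin 2) F) 0 1 = 0 ∧
      (A : Matrix (Fin 2) (Fin 2) F) 0 0 = (A : Matrix (Fin 2) (Fin 2) F) 1 1 := by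
  rw [Semigroup.mem_center_iff]
  constructor
  · intro h
    have hD := h ⟨!![(1:F),0;0,0], by simp [mem_tri_iff]⟩
    have hN := h ⟨!![(0:F),1;0,0], by simp [mem_tri_iff]⟩
    have hD' := congrFun (congrFun (congrArg Subtype.val hD) 0) 1
    have hN' := congrFun (congrFun (congrArg Subtype.val hN) 0) 1
    rw [tri_coe_mul, tri_coe_mul] at hD' hN'
    simp [Matrix.mul_apply, Fin.sum_univ_two] at hD' hN'
    exact ⟨hD', hN'.symm⟩
  · rintro ⟨h1, h2⟩ B
    apply Subtype.ext
    rw [tri_coe_mul, tri_coe_mul]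
    ext i j
    fin_cases i <;> fin_cases j <;>
      simp [Matrix.mul_apply, Fin.sum_univ_two, h1, h2, tri_lower, mul_comm]

lemma tri_comm_iff (A B : Tri F) :
    A * B = B * A ↔
      ((A : Matrix (Fin 2) (Fin 2) F) 0 0 - (A : Matrix (Fin 2) (Fin 2) F) 1 1)
          * (B : Matrix (Fin 2) (Fin 2) F) 0 1
        = ((B : Matrix (Fin 2) (Fin 2) F) 0 0 - (B : Matrix (Fin 2) (Fin 2) F) 1 1)
          * (A : Matrix (Fin 2) (Fin 2) F) 0 1 := by
  rw [Subtype.ext_iff, tri_coe_mul, tri_coe_mul, ← Matrix.ext_iff]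
  simp only [Fin.forall_fin_two, Matrix.mul_apply, Fin.sum_univ_two, tri_lower,
    mul_zero, zero_mul, add_zero, zero_add]
  constructor
  · rintro ⟨⟨-, h⟩, -⟩
    linear_combination h
  · intro h
    exact ⟨⟨mul_comm _ _, by linear_combination h⟩, trivial, mul_comm _ _⟩

variable [Fintype F]

lemma card_pairs [DecidableEq F] :
    (Finset.univ.filter fun p : F × F => p.2 ≠ 0).card
      = Fintype.card F ^ 2 - Fintype.card F := by
  have h : (Finset.univ.filter fun p : F × F => p.2 ≠ 0)
      = Finset.univ ×ˢ ({0}ᶜ : Finset F) := by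
    ext p
    simp [Finset.mem_filter, Finset.mem_product]
  rw [h, Finset.card_product, Finset.card_compl, Finset.card_singleton, Finset.card_univ,
    sq, Nat.mul_sub, mul_one]

lemma clique_card_le (s : Finset {x : Tri F // x ∉ Set.center (Tri F)})
    (hs : (commGraph (Tri F)).IsClique s) :
    s.card ≤ Fintype.card F ^ 2 - Fintype.card F := by
  classical
  rcases s.eq_empty_or_nonempty with rfl | ⟨v, hv⟩
  · simp
  have hcomm : ∀ X ∈ s, (X : Tri F) * (v : Tri F) = (v : Tri F) * (X : Tri F) := by
    intro X hX
    by_cases hXv : X = v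
    · rw [hXv]
    · exact (hs hX hv hXv).2
  have hrel : ∀ X ∈ s,
      ((X.1 : Matrix (Fin 2) (Fin 2) F) 0 0 - (X.1 : Matrix (Fin 2) (Fin 2) F) 1 1)
          * (v.1 : Matrix (Fin 2) (Fin 2) F) 0 1
        = ((v.1 : Matrix (Fin 2) (Fin 2) F) 0 0 - (v.1 : Matrix (Fin 2) (Fin 2) F) 1 1)
          * (X.1 : Matrix (Fin 2) (Fin 2) F) 0 1 :=
    fun X hX => (tri_comm_iff _ _).1 (hcomm X hX)
  have hvnc : ¬ ((v.1 : Matrix (Fin 2) (Fin 2) F) 0 1 = 0 ∧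
      (v.1 : Matrix (Fin 2) (Fin 2) F) 0 0 = (v.1 : Matrix (Fin 2) (Fin 2) F) 1 1) := by
    rw [← mem_center_tri_iff]; exact v.2
  rw [← card_pairs (F := F)]
  by_cases hb : (v.1 : Matrix (Fin 2) (Fin 2) F) 0 1 = 0
  · -- v is diagonal with distinct diagonal entries; all of s is diagonal
    have hac : (v.1 : Matrix (Fin 2) (Fin 2) F) 0 0 ≠ (v.1 : Matrix (Fin 2) (Fin 2) F) 1 1 :=
      fun h => hvnc ⟨hb, h⟩
    have hdiag : ∀ X ∈ s, (X.1 : Matrix (Fin 2) (Fin 2) F) 0 1 = 0 := by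
      intro X hX
      have h := hrel X hX
      rw [hb, mul_zero] at h
      exact (mul_eq_zero.1 h.symm).resolve_left (sub_ne_zero.2 hac)
    apply Finset.card_le_card_of_injOn (fun X => ((X.1 : Matrix (Fin 2) (Fin 2) F) 0 0,
      (X.1 : Matrix (Fin 2) (Fin 2) F) 1 1 - (X.1 : Matrix (Fin 2) (Fin 2) F) 0 0))
    · intro X hX
      simp only [Finset.mem_coe, Finset.mem_filter, Finset.mem_univ, true_and]
      refine sub_ne_zero.2 fun h => ?_
      exact X.2 ((mem_center_tri_iff X.1).2 ⟨hdiag X hX, h.symm⟩)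
    · intro X hX Y hY h
      simp only [Prod.mk.injEq] at h
      have h00 : (X.1 : Matrix (Fin 2) (Fin 2) F) 0 0 = (Y.1 : Matrix (Fin 2) (Fin 2) F) 0 0 := h.1
      have h11 : (X.1 : Matrix (Fin 2) (Fin 2) F) 1 1 = (Y.1 : Matrix (Fin 2) (Fin 2) F) 1 1 := by
        have h2 := h.2
        rw [h00] at h2
        linear_combination h2
      apply Subtype.ext; apply Subtype.ext
      rw [← Matrix.ext_iff]
      simp only [Fin.forall_fin_two]
      exact ⟨⟨h00, by rw [hdiag X hX, hdiag Y hY]⟩, by rw [tri_lower, tri_lower], h11⟩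
  · -- v has nonzero upper-right entry
    apply Finset.card_le_card_of_injOn (fun X => ((X.1 : Matrix (Fin 2) (Fin 2) F) 0 0,
      (X.1 : Matrix (Fin 2) (Fin 2) F) 0 1))
    · intro X hX
      simp only [Finset.mem_coe, Finset.mem_filter, Finset.mem_univ, true_and]
      intro hy
      have h := hrel X hX
      rw [hy, mul_zero] at h
      have hxz := (mul_eq_zero.1 h).resolve_right hb
      exact X.2 ((mem_center_tri_iff X.1).2 ⟨hy, sub_eq_zero.1 hxz⟩)
    · intro X hX Y hY h
      simp only [Prod.mk.injEq] at h
      have hX' := hrel X hX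
      have hY' := hrel Y hY
      rw [h.1, h.2] at hX'
      have hXY := hX'.trans hY'.symm
      have h2 : ((Y.1 : Matrix (Fin 2) (Fin 2) F) 1 1 - (X.1 : Matrix (Fin 2) (Fin 2) F) 1 1)
          * (v.1 : Matrix (Fin 2) (Fin 2) F) 0 1 = 0 := by linear_combination hXY
      have h11 : (X.1 : Matrix (Fin 2) (Fin 2) F) 1 1 = (Y.1 : Matrix (Fin 2) (Fin 2) F) 1 1 :=
        (sub_eq_zero.1 ((mul_eq_zero.1 h2).resolve_right hb)).symm
      apply Subtype.ext; apply Subtype.ext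
      rw [← Matrix.ext_iff]
      simp only [Fin.forall_fin_two]
      exact ⟨⟨h.1, h.2⟩, by rw [tri_lower, tri_lower], h11⟩

lemma lower_clique_exists :
    ∃ t : Finset {x : Tri F // x ∉ Set.center (Tri F)},
      (commGraph (Tri F)).IsClique t ∧ t.card = Fintype.card F ^ 2 - Fintype.card F := by
  classical
  haveI : Fintype (Tri F) := Fintype.ofFinite _
  haveI : Fintype {x : Tri F // x ∉ Set.center (Tri F)} := Fintype.ofFinite _
  refine ⟨Finset.univ.filter (fun X => (X.1 : Matrix (Fin 2) (Fin 2) F) 0 0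
      = (X.1 : Matrix (Fin 2) (Fin 2) F) 1 1), ?_, ?_⟩
  · intro X hX Y hY hne
    simp only [Finset.coe_filter, Set.mem_setOf_eq, Finset.mem_univ, true_and] at hX hY
    refine ⟨hne, (tri_comm_iff _ _).2 ?_⟩
    simp [hX, hY]
  · rw [← card_pairs (F := F)]
    refine Finset.card_bij' (fun X _ => ((X.1.1 : Matrix (Fin 2) (Fin 2) F) 0 0,
        (X.1.1 : Matrix (Fin 2) (Fin 2) F) 0 1))
      (fun p hp => ⟨⟨!![p.1, p.2; 0, p.1], by simp [mem_tri_iff]⟩, fun hc => by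
        rw [mem_center_tri_iff] at hc
        simp only [Finset.mem_filter, Finset.mem_univ, true_and] at hp
        exact hp (by simpa using hc.1)⟩) ?_ ?_ ?_ ?_
    · intro X hX
      simp only [Finset.mem_filter, Finset.mem_univ, true_and] at hX ⊢
      intro hy
      exact X.2 ((mem_center_tri_iff X.1).2 ⟨hy, hX⟩)
    · intro p hp
      simp only [Finset.mem_filter, Finset.mem_univ, true_and]
      simp
    · intro X hX
      simp only [Finset.mem_filter, Finset.mem_univ, true_and] at hX
      apply Subtype.ext; apply Subtype.ext
      rw [← Matrix.ext_iff]
      simp only [Fin.forall_fin_two]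
      refine ⟨⟨by simp, by simp⟩, by simp [tri_lower], by simp [← hX]⟩
    · intro p hp
      simp

end Aux

/-- Theorem 2.9(ii): the clique number of the commuting graph of `Tri F` over
a finite field `F` of order `q` is `q^2 - q`. -/
theorem cliqueNum_commGraph_tri_field {F : Type*} [Field F] [Fintype F] (q : ℕ)
    (hq : Fintype.card F = q) :
    (commGraph (Tri F)).cliqueNum = q ^ 2 - q := by
  classical
  haveI : Fintype (Tri F) := Fintype.ofFinite _
  haveI : Fintype {x : Tri F // x ∉ Set.center (Tri F)} := Fintype.ofFinite _
  subst hq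
  apply le_antisymm
  · obtain ⟨s, hs⟩ := (commGraph (Tri F)).exists_isNClique_cliqueNum
    rw [← hs.card_eq]
    exact clique_card_le s hs.isClique
  · obtain ⟨t, ht, htc⟩ := lower_clique_exists (F := F)
    rw [← htc]
    exact SimpleGraph.IsClique.card_le_cliqueNum (tc := ht)
end

section
/- Let m ≥ 2 be an integer such that Z_m is not a field (i.e., m is not prime), and let T = Tr(Z_m). Then the commuting graph Γ(T) is connected and its diameter is 3. -/
open Matrix

section Helpers

variable {R : Type*} [CommRing R]

lemma mem_tri (A : Matrix (Fin 2) (Fin 2) R) : A ∈ Tri R ↔ A 1 0 = 0 := Iff.rfl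

/-- Constructor for elements of `Tri R`. -/
def tmk (a b d : R) : Tri R := ⟨!![a,b;0,d], by simp [mem_tri]⟩

@[simp] lemma tmk00 (a b d : R) : (tmk a b d).val 0 0 = a := rfl
@[simp] lemma tmk01 (a b d : R) : (tmk a b d).val 0 1 = b := rfl
@[simp] lemma tmk11 (a b d : R) : (tmk a b d).val 1 1 = d := rfl

lemma tri_eq (A : Tri R) : A = tmk (A.val 0 0) (A.val 0 1) (A.val 1 1) := by
  apply Subtype.ext
  rw [← Matrix.ext_iff]
  simp only [Fin.forall_fin_two]
  refine ⟨⟨rfl, rfl⟩, ⟨?_, rfl⟩⟩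
  show _ = (0:R)
  exact A.2

lemma exists_tmk (A : Tri R) : ∃ a b d, A = tmk a b d := ⟨_, _, _, tri_eq A⟩

lemma tmk_mul (a b d e f g : R) : tmk a b d * tmk e f g = tmk (a*e) (a*f + b*g) (d*g) := by
  apply Subtype.ext
  show (!![a,b;0,d] : Matrix _ _ R) * !![e,f;0,g] = _
  rw [Matrix.mul_fin_two]
  simp [tmk]

lemma tmk_inj {a b d e f g : R} (h : tmk a b d = tmk e f g) : a = e ∧ b = f ∧ d = g := by
  refine ⟨?_, ?_, ?_⟩
  · have := congrArg (fun X : Tri R => X.val 0 0) h; simpa using this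
  · have := congrArg (fun X : Tri R => X.val 0 1) h; simpa using this
  · have := congrArg (fun X : Tri R => X.val 1 1) h; simpa using this

lemma tri_commute_iff (a b d e f g : R) :
    tmk a b d * tmk e f g = tmk e f g * tmk a b d ↔ b * (e - g) = f * (a - d) := by
  rw [tmk_mul, tmk_mul]
  constructor
  · intro h
    obtain ⟨h1, h2, h3⟩ := tmk_inj h
    linear_combination -h2
  · intro h
    congr 1 <;> [ring; skip; ring]
    linear_combination -h

lemma center_iff (a b d : R) :
    tmk a b d ∈ Set.center (Tri R) ↔ (b = 0 ∧ a = d) := by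
  rw [Semigroup.mem_center_iff]
  constructor
  · intro hc
    have h1 := (tri_commute_iff 0 1 0 a b d).mp (hc (tmk 0 1 0))
    have h2 := (tri_commute_iff 1 0 0 a b d).mp (hc (tmk 1 0 0))
    constructor
    · linear_combination -h2
    · linear_combination h1
  · rintro ⟨rfl, rfl⟩ g
    obtain ⟨e, f, g', rfl⟩ := exists_tmk g
    rw [tri_commute_iff]
    ring

lemma exists_ann {m : ℕ} [NeZero m] {x : ZMod m} (hx : ¬IsUnit x) :
    ∃ s, s ≠ 0 ∧ s * x = 0 := by
  by_contra hcon
  push_neg at hcon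
  have hinj : Function.Injective (fun s : ZMod m => s * x) := by
    intro s t hst
    by_contra hne
    exact hcon (s - t) (sub_ne_zero.mpr hne) (by simp at hst; ring_nf; linear_combination hst)
  obtain ⟨s, hs⟩ := (Finite.injective_iff_surjective.mp hinj) 1
  exact hx (IsUnit.of_mul_eq_one (a := x) s (by linear_combination hs))

lemma pq_exists {m : ℕ} (hm : 2 ≤ m) (h : ¬ m.Prime) :
    ∃ p q : ZMod m, p ≠ 0 ∧ q ≠ 0 ∧ p * q = 0 := by
  obtain ⟨p, hdvd, hp2, hplt⟩ := Nat.exists_dvd_of_not_prime2 hm h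
  obtain ⟨q, rfl⟩ := hdvd
  have hq2 : 2 ≤ q := by
    rcases q with _ | _ | q
    · omega
    · omega
    · omega
  have hqlt : q < p * q := by nlinarith
  refine ⟨(p : ZMod (p*q)), (q : ZMod (p*q)), ?_, ?_, ?_⟩
  · intro hc
    rw [ZMod.natCast_eq_zero_iff] at hc
    have := Nat.le_of_dvd (by omega) hc
    nlinarith
  · intro hc
    rw [ZMod.natCast_eq_zero_iff] at hc
    have := Nat.le_of_dvd (by omega) hc
    omega
  · rw [← Nat.cast_mul, ZMod.natCast_self]

end Helpers

section Main

variable {m : ℕ}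

/-- Abbreviation for the vertex type. -/
abbrev TriV (m : ℕ) := {x : Tri (ZMod m) // x ∉ Set.center (Tri (ZMod m))}

lemma comm_step [NeZero m] (u v : TriV m)
    (h : (u : Tri (ZMod m)) * v = v * u) : (commGraph (Tri (ZMod m))).edist u v ≤ 1 := by
  by_cases he : u = v
  · subst he
    simp [SimpleGraph.edist_self]
  · have hadj : (commGraph (Tri (ZMod m))).Adj u v := ⟨he, h⟩
    calc (commGraph (Tri (ZMod m))).edist u v ≤ (hadj.toWalk).length := SimpleGraph.edist_le _
    _ ≤ 1 := by simp

/-- For a vertex with unit diagonal difference, a middle commuting vertex with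
prescribed nonzero diagonal difference `t`, whose corner entry is a multiple of `t`. -/
lemma mid_unit [NeZero m] (a b d : ZMod m) (hX : tmk a b d ∉ Set.center (Tri (ZMod m)))
    (hu : IsUnit (a - d)) (t : ZMod m) (ht : t ≠ 0) :
    ∃ c : ZMod m, tmk t (t * c) 0 ∉ Set.center (Tri (ZMod m)) ∧
      tmk a b d * tmk t (t * c) 0 = tmk t (t * c) 0 * tmk a b d := by
  obtain ⟨v, hv⟩ := hu.exists_right_inv
  refine ⟨b * v, ?_, ?_⟩
  · rw [center_iff]
    rintro ⟨-, h0⟩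
    exact ht h0
  · rw [tri_commute_iff]
    linear_combination (-(t*b)) * hv

end Main

section Main2

variable {m : ℕ}

lemma key_half [NeZero m] (p q : ZMod m) (hp : p ≠ 0) (hq : q ≠ 0) (hpq : p * q = 0)
    (X Y : TriV m) (a b d e f g : ZMod m)
    (hX : (X : Tri (ZMod m)) = tmk a b d) (hY : (Y : Tri (ZMod m)) = tmk e f g)
    (hu : IsUnit (a - d)) :
    ∃ c d' : TriV m, (X : Tri (ZMod m)) * c = c * X ∧
      (c : Tri (ZMod m)) * d' = d' * c ∧ (d' : Tri (ZMod m)) * Y = Y * d' := by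
  have hXnc : tmk a b d ∉ Set.center (Tri (ZMod m)) := hX ▸ X.2
  have hYnc : tmk e f g ∉ Set.center (Tri (ZMod m)) := hY ▸ Y.2
  by_cases hu' : IsUnit (e - g)
  · -- both unit diagonal differences
    obtain ⟨c1, hc1nc, hc1⟩ := mid_unit a b d hXnc hu p hp
    obtain ⟨c2, hc2nc, hc2⟩ := mid_unit e f g hYnc hu' q hq
    refine ⟨⟨tmk p (p * c1) 0, hc1nc⟩, ⟨tmk q (q * c2) 0, hc2nc⟩, ?_, ?_, ?_⟩
    · rw [hX]; exact hc1
    · show tmk p (p*c1) 0 * tmk q (q*c2) 0 = tmk q (q*c2) 0 * tmk p (p*c1) 0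
      rw [tri_commute_iff]
      linear_combination (c1 - c2) * hpq
    · rw [hY]; exact hc2.symm
  · by_cases hd : e - g = 0
    · -- Y has equal diagonal entries
      obtain ⟨c1, hc1nc, hc1⟩ := mid_unit a b d hXnc hu p hp
      have hqnc : tmk (0:ZMod m) q 0 ∉ Set.center (Tri (ZMod m)) := by
        rw [center_iff]; rintro ⟨h0, -⟩; exact hq h0
      refine ⟨⟨tmk p (p * c1) 0, hc1nc⟩, ⟨tmk 0 q 0, hqnc⟩, ?_, ?_, ?_⟩
      · rw [hX]; exact hc1
      · show tmk p (p*c1) 0 * tmk 0 q 0 = tmk 0 q 0 * tmk p (p*c1) 0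
        rw [tri_commute_iff]
        linear_combination -hpq
      · rw [hY]
        show tmk (0:ZMod m) q 0 * tmk e f g = tmk e f g * tmk 0 q 0
        rw [tri_commute_iff]
        linear_combination q * hd
    · -- Y has nonunit, nonzero diagonal difference
      obtain ⟨s, hs0, hs⟩ := exists_ann hu'
      obtain ⟨c1, hc1nc, hc1⟩ := mid_unit a b d hXnc hu (e - g) hd
      have hsnc : tmk (0:ZMod m) s 0 ∉ Set.center (Tri (ZMod m)) := by
        rw [center_iff]; rintro ⟨h0, -⟩; exact hs0 h0
      refine ⟨⟨tmk (e-g) ((e-g) * c1) 0, hc1nc⟩, ⟨tmk 0 s 0, hsnc⟩, ?_, ?_, ?_⟩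
      · rw [hX]; exact hc1
      · show tmk (e-g) ((e-g)*c1) 0 * tmk 0 s 0 = tmk 0 s 0 * tmk (e-g) ((e-g)*c1) 0
        rw [tri_commute_iff]
        linear_combination -hs
      · rw [hY]
        show tmk (0:ZMod m) s 0 * tmk e f g = tmk e f g * tmk 0 s 0
        rw [tri_commute_iff]
        linear_combination hs

lemma key_s16 [NeZero m] (p q : ZMod m) (hp : p ≠ 0) (hq : q ≠ 0) (hpq : p * q = 0)
    (X Y : TriV m) :
    ∃ c d' : TriV m, (X : Tri (ZMod m)) * c = c * X ∧
      (c : Tri (ZMod m)) * d' = d' * c ∧ (d' : Tri (ZMod m)) * Y = Y * d' := by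
  obtain ⟨a, b, d, hX⟩ := exists_tmk (X : Tri (ZMod m))
  obtain ⟨e, f, g, hY⟩ := exists_tmk (Y : Tri (ZMod m))
  by_cases hu : IsUnit (a - d)
  · exact key_half p q hp hq hpq X Y a b d e f g hX hY hu
  · by_cases hu' : IsUnit (e - g)
    · obtain ⟨c, d', h1, h2, h3⟩ := key_half p q hp hq hpq Y X e f g a b d hY hX hu'
      exact ⟨d', c, h3.symm, h2.symm, h1.symm⟩
    · -- both nonunit
      obtain ⟨s, hs0, hs⟩ := exists_ann hu
      obtain ⟨s', hs0', hs'⟩ := exists_ann hu'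
      have hsnc : tmk (0:ZMod m) s 0 ∉ Set.center (Tri (ZMod m)) := by
        rw [center_iff]; rintro ⟨h0, -⟩; exact hs0 h0
      have hsnc' : tmk (0:ZMod m) s' 0 ∉ Set.center (Tri (ZMod m)) := by
        rw [center_iff]; rintro ⟨h0, -⟩; exact hs0' h0
      refine ⟨⟨tmk 0 s 0, hsnc⟩, ⟨tmk 0 s' 0, hsnc'⟩, ?_, ?_, ?_⟩
      · rw [hX]
        show tmk a b d * tmk 0 s 0 = tmk 0 s 0 * tmk a b d
        rw [tri_commute_iff]
        linear_combination -hs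
      · show tmk (0:ZMod m) s 0 * tmk 0 s' 0 = tmk 0 s' 0 * tmk 0 s 0
        rw [tri_commute_iff]; ring
      · rw [hY]
        show tmk (0:ZMod m) s' 0 * tmk e f g = tmk e f g * tmk 0 s' 0
        rw [tri_commute_iff]
        linear_combination hs'

end Main2

section Final

variable {m : ℕ}

/-- Theorem 2.10: if `m ≥ 2` is not prime (so `ℤ/m` is not a field), the
commuting graph of `Tri (ZMod m)` is connected and has diameter `3`. -/
theorem commGraph_tri_zmod_connected_diam (m : ℕ) (hm : 2 ≤ m) (h : ¬ m.Prime) :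
    (commGraph (Tri (ZMod m))).Connected ∧
      (commGraph (Tri (ZMod m))).diam = 3 := by
  haveI : NeZero m := ⟨by omega⟩
  haveI : Fact (1 < m) := ⟨by omega⟩
  set G := commGraph (Tri (ZMod m)) with hG
  obtain ⟨p, q, hp, hq, hpq⟩ := pq_exists hm h
  -- upper bound on all distances
  have hub : ∀ u v : TriV m, G.edist u v ≤ 3 := by
    intro u v
    obtain ⟨c, d', h1, h2, h3⟩ := key_s16 p q hp hq hpq u v
    calc G.edist u v ≤ G.edist u c + G.edist c v := SimpleGraph.edist_triangle
    _ ≤ G.edist u c + (G.edist c d' + G.edist d' v) := by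
        gcongr
        exact SimpleGraph.edist_triangle
    _ ≤ 1 + (1 + 1) := by
        gcongr
        · exact comm_step u c h1
        · exact comm_step c d' h2
        · exact comm_step d' v h3
    _ = 3 := by norm_num
  -- the two extremal vertices
  have hnc1 : tmk (0:ZMod m) 0 1 ∉ Set.center (Tri (ZMod m)) := by
    rw [center_iff]; rintro ⟨-, h01⟩; exact zero_ne_one h01
  have hnc2 : tmk (0:ZMod m) 1 1 ∉ Set.center (Tri (ZMod m)) := by
    rw [center_iff]; rintro ⟨h01, -⟩; exact one_ne_zero h01
  set L1 : TriV m := ⟨tmk 0 0 1, hnc1⟩ with hL1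
  set L2 : TriV m := ⟨tmk 0 1 1, hnc2⟩ with hL2
  have hlow : (3 : ℕ∞) ≤ G.edist L1 L2 := by
    rw [SimpleGraph.edist_eq_sInf]
    apply le_sInf
    rintro b ⟨w, rfl⟩
    rw [show ((3:ℕ∞) = ((3:ℕ):ℕ∞)) from rfl, Nat.cast_le]
    by_contra hlt
    push_neg at hlt
    rcases hLen : w.length with _ | _ | _ | n
    rotate_right
    · -- long walk
      omega
    · -- length 0 : L1 = L2
      have := w.getVert_length
      rw [hLen, w.getVert_zero] at this
      have h01 := (tmk_inj (Subtype.ext_iff.mp this)).2.1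
      exact zero_ne_one h01
    · -- length 1 : L1 adjacent to L2
      have hadj := w.adj_getVert_succ (by omega : 0 < w.length)
      rw [w.getVert_zero] at hadj
      have hv1 := w.getVert_length
      rw [hLen] at hv1
      rw [hv1] at hadj
      have hcomm := hadj.2
      rw [hL1, hL2] at hcomm
      have := (tri_commute_iff (0:ZMod m) 0 1 0 1 1).mp hcomm
      simp at this
    · -- length 2 : common neighbour
      have hadj1 := w.adj_getVert_succ (by omega : 0 < w.length)
      have hadj2 := w.adj_getVert_succ (by omega : 1 < w.length)
      rw [w.getVert_zero] at hadj1
      have hv2 := w.getVert_length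
      rw [hLen] at hv2
      have hv2' : w.getVert (1+1) = L2 := hv2
      rw [hv2'] at hadj2
      set z := w.getVert 1 with hz
      obtain ⟨e, f, g, hzv⟩ := exists_tmk (z : Tri (ZMod m))
      have hcomm1 := hadj1.2
      rw [hL1, hzv] at hcomm1
      have hf := (tri_commute_iff (0:ZMod m) 0 1 e f g).mp hcomm1
      have hcomm2 := hadj2.2
      rw [hL2, hzv] at hcomm2
      have heg := (tri_commute_iff e f g (0:ZMod m) 1 1).mp hcomm2
      have hf0 : f = 0 := by linear_combination hf
      have heg0 : e = g := by linear_combination -heg - hf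
      apply z.2
      rw [hzv, center_iff]
      exact ⟨hf0, heg0⟩
  have hediam : G.ediam = 3 := by
    apply le_antisymm
    · exact SimpleGraph.ediam_le_of_edist_le hub
    · exact le_trans hlow SimpleGraph.edist_le_ediam
  constructor
  · rw [SimpleGraph.connected_iff]
    refine ⟨fun u v => ?_, ⟨L1⟩⟩
    apply SimpleGraph.reachable_of_edist_ne_top
    exact ne_top_of_le_ne_top (by norm_num) (hub u v)
  · rw [SimpleGraph.diam, hediam]
    rfl

end Final
end
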